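/- Let N̄ = 2^r, H the N̄²×N̄² Paley Hadamard basis, and Ψ_idhw the 2D isotropic discrete Haar wavelet basis (built from Kronecker products of the 1D Haar wavelet and scaling matrices over dyadic levels). Then for each row index l_p = N̄(l_y−1)+l_x, the local coherence satisfies μ_{l_p}(H^* Ψ_idhw) = min{1, 2^{−⌊log₂(max{l_x, l_y} − 1)⌋}}. -/

import Mathlib

/-- Paley-ordered Hadamard basis `H_{2^r}`, given entrywise:
`Had r i j` is the `(i,j)` entry (0-based) of the `2^r × 2^r` matrix defined by
`H_1 = [1]`, `H_{2N} = (1/√2)[H_N ⊗ (1,1)ᵀ, H_N ⊗ (1,-1)ᵀ]`. -/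
noncomputable def Had : ℕ → ℕ → ℕ → ℝ
  | 0, _, _ => 1
  | r + 1, i, j =>
    if j < 2 ^ r then (Real.sqrt 2)⁻¹ * Had r (i / 2) j
    else (if i % 2 = 0 then (1 : ℝ) else -1) * ((Real.sqrt 2)⁻¹ * Had r (i / 2) (j - 2 ^ r))

/-- 1D discrete Haar wavelet basis `W_{2^r}`, entrywise:
`W_1 = [1]`, `W_{2N} = (1/√2)[W_N ⊗ (1,1)ᵀ, I_N ⊗ (1,-1)ᵀ]`. -/
noncomputable def HaarW : ℕ → ℕ → ℕ → ℝ
  | 0, _, _ => 1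
  | r + 1, i, j =>
    if j < 2 ^ r then (Real.sqrt 2)⁻¹ * HaarW r (i / 2) j
    else (Real.sqrt 2)⁻¹ * (if i / 2 = j - 2 ^ r then (if i % 2 = 0 then (1 : ℝ) else -1) else 0)

/-- Haar scaling matrix `W⁰_{2^r}`, entrywise:
`W⁰_1 = [1]`, `W⁰_{2N} = (1/√2)[W⁰_N ⊗ (1,1)ᵀ, I_N ⊗ (1,1)ᵀ]`. -/
noncomputable def HaarW0 : ℕ → ℕ → ℕ → ℝ
  | 0, _, _ => 1
  | r + 1, i, j =>
    if j < 2 ^ r then (Real.sqrt 2)⁻¹ * HaarW0 r (i / 2) j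
    else (Real.sqrt 2)⁻¹ * (if i / 2 = j - 2 ^ r then (1 : ℝ) else 0)

/-- Entry of the 2D isotropic discrete Haar wavelet basis `Ψ_idhw` at spatial position
`(x, y)` (0-based) and column `c = (o, ℓ, a, b)`: `o = 0` is the constant column `Ψ₀`,
and `o ∈ {1,2,3}` are the three orientations `Ψ_{o,ℓ}` at dyadic level `ℓ` with intra-level
offsets `a, b < 2^{ℓ-1}`. -/
noncomputable def psiIdhw (r : ℕ) (c : ℕ × ℕ × ℕ × ℕ) (x y : ℕ) : ℝ :=
  if c.1 = 0 then ((2 : ℝ) ^ r)⁻¹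
  else if c.1 = 1 then
    HaarW0 r x (2 ^ (c.2.1 - 1) + c.2.2.1) * HaarW r y (2 ^ (c.2.1 - 1) + c.2.2.2)
  else if c.1 = 2 then
    HaarW r x (2 ^ (c.2.1 - 1) + c.2.2.1) * HaarW0 r y (2 ^ (c.2.1 - 1) + c.2.2.2)
  else
    HaarW r x (2 ^ (c.2.1 - 1) + c.2.2.1) * HaarW r y (2 ^ (c.2.1 - 1) + c.2.2.2)

/-- The set of column indices of `Ψ_idhw`. -/
def idhwCols (r : ℕ) : Finset (ℕ × ℕ × ℕ × ℕ) :=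
  insert (0, 0, 0, 0)
    (((({1, 2, 3} : Finset ℕ) ×ˢ Finset.Icc 1 r ×ˢ Finset.range (2 ^ r) ×ˢ
        Finset.range (2 ^ r))).filter
      (fun c => c.2.2.1 < 2 ^ (c.2.1 - 1) ∧ c.2.2.2 < 2 ^ (c.2.1 - 1)))

lemma sum_range_double (k : ℕ) (f : ℕ → ℝ) :
    ∑ i ∈ Finset.range (2 * k), f i = ∑ q ∈ Finset.range k, (f (2 * q) + f (2 * q + 1)) := by
  induction k with
  | zero => simp
  | succ n ih =>
      rw [Nat.mul_succ, Finset.sum_range_succ, Finset.sum_range_succ, Finset.sum_range_succ, ← ih]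
      ring_nf

lemma sqrt2_pos : (0:ℝ) < Real.sqrt 2 := Real.sqrt_pos.mpr (by norm_num)

lemma sqrt2_sq : Real.sqrt 2 * Real.sqrt 2 = 2 := Real.mul_self_sqrt (by norm_num)

lemma abs_Had (r i j : ℕ) : |Had r i j| = ((Real.sqrt 2) ^ r)⁻¹ := by
  induction r generalizing i j with
  | zero => simp [Had]
  | succ n ih =>
      rw [Had]
      split_ifs with h1 h2
      · rw [abs_mul, abs_inv, abs_of_pos sqrt2_pos, ih, pow_succ, mul_inv, mul_comm]
      · rw [one_mul, abs_mul, abs_inv, abs_of_pos sqrt2_pos, ih, pow_succ, mul_inv, mul_comm]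
      · rw [abs_mul, abs_neg, abs_one, one_mul, abs_mul, abs_inv,
          abs_of_pos sqrt2_pos, ih, pow_succ, mul_inv, mul_comm]

lemma Had_col0 (r i : ℕ) : Had r i 0 = ((Real.sqrt 2) ^ r)⁻¹ := by
  induction r generalizing i with
  | zero => simp [Had]
  | succ n ih =>
      rw [Had, if_pos (by positivity), ih, pow_succ, mul_inv, mul_comm]

noncomputable def T (r l : ℕ) : ℝ := ∑ x ∈ Finset.range (2 ^ r), Had r x l

lemma T_succ (r l : ℕ) : T (r + 1) l = if l < 2 ^ r then Real.sqrt 2 * T r l else 0 := by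
  have h2 : (2:ℕ) ^ (r+1) = 2 * 2 ^ r := by ring
  rw [T, h2, sum_range_double]
  have hd : ∀ q : ℕ, (2 * q) / 2 = q := fun q => Nat.mul_div_cancel_left q (by norm_num)
  have hd2 : ∀ q : ℕ, (2 * q + 1) / 2 = q := fun q => by omega
  have hm : ∀ q : ℕ, (2 * q) % 2 = 0 := fun q => Nat.mul_mod_right 2 q
  have hm2 : ∀ q : ℕ, (2 * q + 1) % 2 = 1 := fun q => by omega
  split_ifs with h
  · rw [T, Finset.mul_sum]
    refine Finset.sum_congr rfl fun q _ => ?_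
    rw [Had, Had, if_pos h, if_pos h, hd, hd2]
    field_simp
    rw [Real.sq_sqrt (by norm_num)]; ring
  · rw [← Finset.sum_const_zero (s := Finset.range (2^r))]
    refine Finset.sum_congr rfl fun q _ => ?_
    rw [Had, Had, if_neg h, if_neg h, hd, hd2, hm, hm2]
    simp

lemma T_eq (r l : ℕ) (hl : l < 2 ^ r) : T r l = if l = 0 then (Real.sqrt 2) ^ r else 0 := by
  induction r with
  | zero => interval_cases l <;> simp [T, Had]
  | succ n ih =>
      rw [T_succ]
      split_ifs with h h0 h0
      · rw [ih h, if_pos h0, pow_succ, mul_comm]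
      · rw [ih h, if_neg h0, mul_zero]
      · omega
      · rfl

noncomputable def S0 (r l j : ℕ) : ℝ := ∑ x ∈ Finset.range (2 ^ r), Had r x l * HaarW0 r x j
noncomputable def S (r l j : ℕ) : ℝ := ∑ x ∈ Finset.range (2 ^ r), Had r x l * HaarW r x j

lemma S_succ (r l j : ℕ) (hj : j < 2 ^ (r + 1)) :
    S (r + 1) l j = if j < 2 ^ r then (if l < 2 ^ r then S r l j else 0)
      else (if l < 2 ^ r then 0 else Had r (j - 2 ^ r) (l - 2 ^ r)) := by
  have h2 : (2:ℕ) ^ (r+1) = 2 * 2 ^ r := by ring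
  have hs : (Real.sqrt 2)⁻¹ * (Real.sqrt 2)⁻¹ = 2⁻¹ := by rw [← mul_inv, sqrt2_sq]
  have h10 : ((1:ℕ) = 0) = False := by simp
  have h00 : ((0:ℕ) = 0) = True := by simp
  rw [S, h2, sum_range_double]
  have hd : ∀ q : ℕ, (2 * q) / 2 = q := fun q => Nat.mul_div_cancel_left q (by norm_num)
  have hd2 : ∀ q : ℕ, (2 * q + 1) / 2 = q := fun q => by omega
  have hm : ∀ q : ℕ, (2 * q) % 2 = 0 := fun q => Nat.mul_mod_right 2 q
  have hm2 : ∀ q : ℕ, (2 * q + 1) % 2 = 1 := fun q => by omega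
  have key : ∀ q ∈ Finset.range (2 ^ r),
      Had (r+1) (2*q) l * HaarW (r+1) (2*q) j + Had (r+1) (2*q+1) l * HaarW (r+1) (2*q+1) j =
      if j < 2 ^ r then (if l < 2 ^ r then Had r q l * HaarW r q j else 0)
        else (if l < 2 ^ r then 0 else
          (if q = j - 2 ^ r then Had r q (l - 2^r) else 0)) := by
    intro q _
    rw [Had, Had, HaarW, HaarW, hd, hd2, hm, hm2]
    by_cases hj' : j < 2 ^ r
    · by_cases hl : l < 2 ^ r
      · simp only [hj', hl, if_true, ite_true]
        linear_combination 2 * Had r q l * HaarW r q j * hs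
      · simp only [hj', hl, h10, h00, if_true, if_false, ite_true, ite_false]
        ring
    · by_cases hl : l < 2 ^ r
      · by_cases hq : q = j - 2 ^ r <;>
          simp only [hj', hl, hq, h10, h00, if_true, if_false, ite_true, ite_false] <;> ring
      · by_cases hq : q = j - 2 ^ r
        · simp only [hj', hl, hq, h10, h00, if_true, if_false, ite_true, ite_false]
          linear_combination 2 * Had r (j - 2 ^ r) (l - 2 ^ r) * hs
        · simp only [hj', hl, hq, h10, h00, if_true, if_false, ite_true, ite_false]
          ring
  rw [Finset.sum_congr rfl key]
  split_ifs with h1 h3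
  · rw [S]
  · simp
  · simp
  · rw [Finset.sum_ite_eq' (Finset.range (2^r)) (j - 2^r) (fun q => Had r q (l - 2^r)),
      if_pos (Finset.mem_range.mpr (by omega))]

lemma S0_succ (r l j : ℕ) (hj : j < 2 ^ (r + 1)) :
    S0 (r + 1) l j = if j < 2 ^ r then (if l < 2 ^ r then S0 r l j else 0)
      else (if l < 2 ^ r then Had r (j - 2 ^ r) l else 0) := by
  have h2 : (2:ℕ) ^ (r+1) = 2 * 2 ^ r := by ring
  have hs : (Real.sqrt 2)⁻¹ * (Real.sqrt 2)⁻¹ = 2⁻¹ := by rw [← mul_inv, sqrt2_sq]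
  have h10 : ((1:ℕ) = 0) = False := by simp
  have h00 : ((0:ℕ) = 0) = True := by simp
  rw [S0, h2, sum_range_double]
  have hd : ∀ q : ℕ, (2 * q) / 2 = q := fun q => Nat.mul_div_cancel_left q (by norm_num)
  have hd2 : ∀ q : ℕ, (2 * q + 1) / 2 = q := fun q => by omega
  have hm : ∀ q : ℕ, (2 * q) % 2 = 0 := fun q => Nat.mul_mod_right 2 q
  have hm2 : ∀ q : ℕ, (2 * q + 1) % 2 = 1 := fun q => by omega
  have key : ∀ q ∈ Finset.range (2 ^ r),
      Had (r+1) (2*q) l * HaarW0 (r+1) (2*q) j + Had (r+1) (2*q+1) l * HaarW0 (r+1) (2*q+1) j =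
      if j < 2 ^ r then (if l < 2 ^ r then Had r q l * HaarW0 r q j else 0)
        else (if l < 2 ^ r then (if q = j - 2 ^ r then Had r q l else 0) else 0) := by
    intro q _
    rw [Had, Had, HaarW0, HaarW0, hd, hd2, hm, hm2]
    by_cases hj' : j < 2 ^ r
    · by_cases hl : l < 2 ^ r
      · simp only [hj', hl, if_true, ite_true]
        linear_combination 2 * Had r q l * HaarW0 r q j * hs
      · simp only [hj', hl, h10, h00, if_true, if_false, ite_true, ite_false]
        ring
    · by_cases hl : l < 2 ^ r
      · by_cases hq : q = j - 2 ^ r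
        · simp only [hj', hl, hq, h10, h00, if_true, if_false, ite_true, ite_false]
          linear_combination 2 * Had r (j - 2 ^ r) l * hs
        · simp only [hj', hl, hq, h10, h00, if_true, if_false, ite_true, ite_false]
          ring
      · by_cases hq : q = j - 2 ^ r <;>
          simp only [hj', hl, hq, h10, h00, if_true, if_false, ite_true, ite_false] <;> ring
  rw [Finset.sum_congr rfl key]
  split_ifs with h1 h3
  · rw [S0]
  · simp
  · rw [Finset.sum_ite_eq' (Finset.range (2^r)) (j - 2^r) (fun q => Had r q l),
      if_pos (Finset.mem_range.mpr (by omega))]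
  · simp

lemma S0_zero (r l : ℕ) (hl : l < 2 ^ r) : S0 r l 0 = if l = 0 then 1 else 0 := by
  induction r with
  | zero =>
      interval_cases l
      simp [S0, Had, HaarW0]
  | succ n ih =>
      rw [S0_succ n l 0 (by positivity), if_pos (by positivity)]
      by_cases h : l < 2 ^ n
      · rw [if_pos h, ih h]
      · rw [if_neg h, if_neg (by omega)]

lemma pow_halves (ℓ : ℕ) (h : 1 ≤ ℓ) : (2:ℕ) ^ (ℓ - 1) + 2 ^ (ℓ - 1) = 2 ^ ℓ := by
  conv_rhs => rw [show ℓ = (ℓ - 1) + 1 from by omega]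
  rw [pow_succ]; ring

lemma abs_S (r ℓ a l : ℕ) (h1 : 1 ≤ ℓ) (h2 : ℓ ≤ r) (ha : a < 2 ^ (ℓ - 1)) (hl : l < 2 ^ r) :
    |S r l (2 ^ (ℓ - 1) + a)| =
      if 2 ^ (ℓ - 1) ≤ l ∧ l < 2 ^ ℓ then ((Real.sqrt 2) ^ (ℓ - 1))⁻¹ else 0 := by
  induction r with
  | zero => omega
  | succ n ih =>
      have hjl : 2 ^ (ℓ - 1) + a < 2 ^ ℓ := by
        have := pow_halves ℓ h1; omega
      have hj : 2 ^ (ℓ - 1) + a < 2 ^ (n + 1) :=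
        lt_of_lt_of_le hjl (Nat.pow_le_pow_right (by norm_num) h2)
      rw [S_succ _ _ _ hj]
      rcases Nat.lt_or_ge ℓ (n + 1) with hℓ | hℓ
      · have hℓn : ℓ ≤ n := by omega
        have hjn : 2 ^ (ℓ - 1) + a < 2 ^ n :=
          lt_of_lt_of_le hjl (Nat.pow_le_pow_right (by norm_num) hℓn)
        rw [if_pos hjn]
        by_cases h : l < 2 ^ n
        · rw [if_pos h, ih hℓn h]
        · rw [if_neg h, abs_zero, if_neg]
          rintro ⟨-, hc⟩
          have : (2:ℕ) ^ ℓ ≤ 2 ^ n := Nat.pow_le_pow_right (by norm_num) hℓn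
          omega
      · have hℓe : ℓ = n + 1 := by omega
        subst hℓe
        simp only [Nat.add_sub_cancel] at *
        rw [if_neg (by omega)]
        by_cases h : l < 2 ^ n
        · rw [if_pos h, abs_zero, if_neg (by omega)]
        · rw [if_neg h, abs_Had, if_pos ⟨by omega, hl⟩]

lemma abs_S0 (r ℓ a l : ℕ) (h1 : 1 ≤ ℓ) (h2 : ℓ ≤ r) (ha : a < 2 ^ (ℓ - 1)) (hl : l < 2 ^ r) :
    |S0 r l (2 ^ (ℓ - 1) + a)| =
      if l < 2 ^ (ℓ - 1) then ((Real.sqrt 2) ^ (ℓ - 1))⁻¹ else 0 := by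
  induction r with
  | zero => omega
  | succ n ih =>
      have hjl : 2 ^ (ℓ - 1) + a < 2 ^ ℓ := by
        have := pow_halves ℓ h1; omega
      have hj : 2 ^ (ℓ - 1) + a < 2 ^ (n + 1) :=
        lt_of_lt_of_le hjl (Nat.pow_le_pow_right (by norm_num) h2)
      rw [S0_succ _ _ _ hj]
      rcases Nat.lt_or_ge ℓ (n + 1) with hℓ | hℓ
      · have hℓn : ℓ ≤ n := by omega
        have hjn : 2 ^ (ℓ - 1) + a < 2 ^ n :=
          lt_of_lt_of_le hjl (Nat.pow_le_pow_right (by norm_num) hℓn)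
        rw [if_pos hjn]
        by_cases h : l < 2 ^ n
        · rw [if_pos h, ih hℓn h]
        · rw [if_neg h, abs_zero, if_neg]
          intro hc
          have h1n : (2:ℕ) ^ (ℓ - 1) ≤ 2 ^ n := Nat.pow_le_pow_right (by norm_num) (by omega)
          omega
      · have hℓe : ℓ = n + 1 := by omega
        subst hℓe
        simp only [Nat.add_sub_cancel] at *
        rw [if_neg (by omega)]
        by_cases h : l < 2 ^ n
        · rw [if_pos h, abs_Had, if_pos h]
        · rw [if_neg h, abs_zero, if_neg h]

lemma val_prod (r lx ly : ℕ) (A B : ℕ → ℝ) :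
    |∑ x ∈ Finset.range (2 ^ r), ∑ y ∈ Finset.range (2 ^ r),
      Had r x lx * Had r y ly * (A x * B y)| =
    |∑ x ∈ Finset.range (2 ^ r), Had r x lx * A x| *
      |∑ y ∈ Finset.range (2 ^ r), Had r y ly * B y| := by
  have h : ∑ x ∈ Finset.range (2 ^ r), ∑ y ∈ Finset.range (2 ^ r),
      Had r x lx * Had r y ly * (A x * B y) =
      ∑ x ∈ Finset.range (2 ^ r), ∑ y ∈ Finset.range (2 ^ r),
        (Had r x lx * A x) * (Had r y ly * B y) := by
    refine Finset.sum_congr rfl fun x _ => Finset.sum_congr rfl fun y _ => by ring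
  rw [h, ← Finset.sum_mul_sum, abs_mul]

lemma val0 (r lx ly : ℕ) (hx : lx < 2 ^ r) (hy : ly < 2 ^ r) :
    |∑ x ∈ Finset.range (2 ^ r), ∑ y ∈ Finset.range (2 ^ r),
      Had r x lx * Had r y ly * psiIdhw r (0, 0, 0, 0) x y| =
    if lx = 0 ∧ ly = 0 then 1 else 0 := by
  have h : ∑ x ∈ Finset.range (2 ^ r), ∑ y ∈ Finset.range (2 ^ r),
      Had r x lx * Had r y ly * psiIdhw r (0, 0, 0, 0) x y =
      T r lx * T r ly * ((2 : ℝ) ^ r)⁻¹ := by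
    rw [T, T, Finset.sum_mul, Finset.sum_mul]
    refine Finset.sum_congr rfl fun x _ => ?_
    rw [Finset.mul_sum, Finset.sum_mul]
    refine Finset.sum_congr rfl fun y _ => ?_
    simp [psiIdhw]
  rw [h, T_eq r lx hx, T_eq r ly hy]
  by_cases h1 : lx = 0 <;> by_cases h2 : ly = 0 <;> simp [h1, h2]
  rw [abs_of_pos sqrt2_pos, ← mul_pow, sqrt2_sq, mul_inv_cancel₀ (by positivity)]

lemma sq_inv_pow (k : ℕ) : ((Real.sqrt 2) ^ k)⁻¹ * ((Real.sqrt 2) ^ k)⁻¹ = ((2:ℝ) ^ k)⁻¹ := by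
  rw [← mul_inv, ← mul_pow, sqrt2_sq]

/-- Local coherence of row `(l_x, l_y)` (0-based) of `H_{N̄²}^* Ψ_idhw`, the big Hadamard
basis being `H_{N̄} ⊗ H_{N̄}`: it equals `min{1, 2^{-⌊log₂(max{l_x,l_y} - 1)⌋}}`
(1-based indices; here `max l_x l_y` is 0-based, so it equals the 1-based `max - 1`). -/
theorem stmt_10 (r lx ly : ℕ) (hx : lx < 2 ^ r) (hy : ly < 2 ^ r) :
    (idhwCols r).sup' ⟨(0, 0, 0, 0), Finset.mem_insert_self _ _⟩
      (fun c => |∑ x ∈ Finset.range (2 ^ r), ∑ y ∈ Finset.range (2 ^ r),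
        Had r x lx * Had r y ly * psiIdhw r c x y|) =
    if max lx ly ≤ 1 then 1 else ((2 : ℝ) ^ Nat.log 2 (max lx ly))⁻¹ := by
  set m := max lx ly with hm
  set L := Nat.log 2 m with hL
  have hrhs : (if m ≤ 1 then (1:ℝ) else ((2 : ℝ) ^ L)⁻¹) = ((2 : ℝ) ^ L)⁻¹ := by
    split_ifs with h
    · interval_cases m <;> simp [hL]
    · rfl
  rw [hrhs]
  -- value of wavelet columns
  have hval : ∀ o ℓ a b : ℕ, o = 1 ∨ o = 2 ∨ o = 3 → 1 ≤ ℓ → ℓ ≤ r →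
      a < 2 ^ (ℓ - 1) → b < 2 ^ (ℓ - 1) →
      |∑ x ∈ Finset.range (2 ^ r), ∑ y ∈ Finset.range (2 ^ r),
        Had r x lx * Had r y ly * psiIdhw r (o, ℓ, a, b) x y| =
      if (if o = 1 then lx < 2 ^ (ℓ - 1) else 2 ^ (ℓ - 1) ≤ lx ∧ lx < 2 ^ ℓ) ∧
         (if o = 2 then ly < 2 ^ (ℓ - 1) else 2 ^ (ℓ - 1) ≤ ly ∧ ly < 2 ^ ℓ)
      then ((2:ℝ) ^ (ℓ - 1))⁻¹ else 0 := by
    intro o ℓ a b ho h1 h2 ha hb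
    rcases ho with rfl | rfl | rfl
    · have e : ∀ x y : ℕ, psiIdhw r (1, ℓ, a, b) x y =
          HaarW0 r x (2 ^ (ℓ - 1) + a) * HaarW r y (2 ^ (ℓ - 1) + b) := by
        intro x y; simp [psiIdhw]
      simp only [e]
      rw [val_prod]
      show |S0 r lx _| * |S r ly _| = _
      rw [abs_S0 r ℓ a lx h1 h2 ha hx, abs_S r ℓ b ly h1 h2 hb hy]
      norm_num
      by_cases p : lx < 2 ^ (ℓ - 1) <;> by_cases q : 2 ^ (ℓ - 1) ≤ ly ∧ ly < 2 ^ ℓ <;>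
        simp [p, q, sq_inv_pow]
    · have e : ∀ x y : ℕ, psiIdhw r (2, ℓ, a, b) x y =
          HaarW r x (2 ^ (ℓ - 1) + a) * HaarW0 r y (2 ^ (ℓ - 1) + b) := by
        intro x y; simp [psiIdhw]
      simp only [e]
      rw [val_prod]
      show |S r lx _| * |S0 r ly _| = _
      rw [abs_S r ℓ a lx h1 h2 ha hx, abs_S0 r ℓ b ly h1 h2 hb hy]
      norm_num
      by_cases p : 2 ^ (ℓ - 1) ≤ lx ∧ lx < 2 ^ ℓ <;> by_cases q : ly < 2 ^ (ℓ - 1) <;>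
        simp [p, q, sq_inv_pow]
    · have e : ∀ x y : ℕ, psiIdhw r (3, ℓ, a, b) x y =
          HaarW r x (2 ^ (ℓ - 1) + a) * HaarW r y (2 ^ (ℓ - 1) + b) := by
        intro x y; simp [psiIdhw]
      simp only [e]
      rw [val_prod]
      show |S r lx _| * |S r ly _| = _
      rw [abs_S r ℓ a lx h1 h2 ha hx, abs_S r ℓ b ly h1 h2 hb hy]
      norm_num
      by_cases p : 2 ^ (ℓ - 1) ≤ lx ∧ lx < 2 ^ ℓ <;> by_cases q : 2 ^ (ℓ - 1) ≤ ly ∧ ly < 2 ^ ℓ <;>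
        simp [p, q, sq_inv_pow]
  have hVpos : (0:ℝ) ≤ ((2:ℝ) ^ L)⁻¹ := by positivity
  have e11 : (((1:ℕ) = 1)) = True := by simp
  have e12 : (((1:ℕ) = 2)) = False := by simp
  have e21 : (((2:ℕ) = 1)) = False := by simp
  have e22 : (((2:ℕ) = 2)) = True := by simp
  have e31 : (((3:ℕ) = 1)) = False := by simp
  have e32 : (((3:ℕ) = 2)) = False := by simp
  refine le_antisymm (Finset.sup'_le _ _ fun c hc => ?_) ?_
  · rw [idhwCols, Finset.mem_insert] at hc
    rcases hc with rfl | hc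
    · rw [val0 r lx ly hx hy]
      split_ifs with h
      · obtain ⟨rfl, rfl⟩ := h
        simp [hL, hm]
      · exact hVpos
    · obtain ⟨o, ℓ, a, b⟩ := c
      simp only [Finset.mem_filter, Finset.mem_product, Finset.mem_insert,
        Finset.mem_singleton, Finset.mem_Icc, Finset.mem_range] at hc
      obtain ⟨⟨ho, ⟨hl1, hl2⟩, -, -⟩, ha, hb⟩ := hc
      rw [hval o ℓ a b ho hl1 hl2 ha hb]
      have hpow : (2:ℕ) ^ (ℓ - 1) ≤ 2 ^ ℓ := Nat.pow_le_pow_right (by norm_num) (by omega)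
      have main : 2 ^ (ℓ - 1) ≤ m → m < 2 ^ ℓ → ((2:ℝ) ^ (ℓ - 1))⁻¹ ≤ ((2:ℝ) ^ L)⁻¹ := by
        intro hb1 hb2
        have hLeq : L = ℓ - 1 := by
          rw [hL]
          refine Nat.log_eq_of_pow_le_of_lt_pow hb1 ?_
          rwa [show ℓ - 1 + 1 = ℓ from by omega]
        rw [hLeq]
      rcases ho with rfl | rfl | rfl
      · simp only [e11, e12, if_true, if_false]
        split_ifs with h
        · obtain ⟨p1, p2, p3⟩ := h
          exact main (by rw [hm]; omega) (by rw [hm]; omega)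
        · exact hVpos
      · simp only [e21, e22, if_true, if_false]
        split_ifs with h
        · obtain ⟨⟨p1, p2⟩, p3⟩ := h
          exact main (by rw [hm]; omega) (by rw [hm]; omega)
        · exact hVpos
      · simp only [e31, e32, if_true, if_false]
        split_ifs with h
        · obtain ⟨⟨p1, p2⟩, p3, p4⟩ := h
          exact main (by rw [hm]; omega) (by rw [hm]; omega)
        · exact hVpos
  · by_cases hm0 : m = 0
    · have hx0 : lx = 0 ∧ ly = 0 := by rw [hm] at hm0; omega
      have h1 : ((2:ℝ) ^ L)⁻¹ = 1 := by
        rw [hL, hm0]; simp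
      rw [h1]
      refine le_trans (le_of_eq ?_) (Finset.le_sup'
        (fun c => |∑ x ∈ Finset.range (2 ^ r), ∑ y ∈ Finset.range (2 ^ r),
          Had r x lx * Had r y ly * psiIdhw r c x y|) (Finset.mem_insert_self _ _))
      rw [val0 r lx ly hx hy, if_pos hx0]
    · have hLr : L < r := by
        rw [hL]
        exact Nat.log_lt_of_lt_pow hm0 (by rw [hm]; omega)
      have hml : 2 ^ L ≤ m := by rw [hL]; exact Nat.pow_log_le_self 2 hm0
      have hmr : m < 2 ^ (L + 1) := by rw [hL]; exact Nat.lt_pow_succ_log_self (by norm_num) m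
      have h0L : (0:ℕ) < 2 ^ (L + 1 - 1) := by positivity
      have hmem : ∀ o : ℕ, o = 1 ∨ o = 2 ∨ o = 3 → (o, L + 1, 0, 0) ∈ idhwCols r := by
        intro o ho
        rw [idhwCols]
        refine Finset.mem_insert_of_mem ?_
        simp only [Finset.mem_filter, Finset.mem_product, Finset.mem_insert,
          Finset.mem_singleton, Finset.mem_Icc, Finset.mem_range]
        refine ⟨⟨by rcases ho with rfl|rfl|rfl <;> simp, ⟨by omega, by omega⟩, by positivity, by positivity⟩, h0L, h0L⟩
      have hxm : lx ≤ m := by rw [hm]; omega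
      have hym : ly ≤ m := by rw [hm]; omega
      by_cases hpx : 2 ^ L ≤ lx
      · by_cases hpy : 2 ^ L ≤ ly
        · have hv := hval 3 (L + 1) 0 0 (Or.inr (Or.inr rfl)) (by omega) (by omega) h0L h0L
          rw [Nat.add_sub_cancel] at hv
          simp only [e31, e32, if_true, if_false] at hv
          rw [if_pos ⟨⟨hpx, by omega⟩, ⟨hpy, by omega⟩⟩] at hv
          exact hv.symm.trans_le (Finset.le_sup' (fun c => |∑ x ∈ Finset.range (2 ^ r), ∑ y ∈ Finset.range (2 ^ r),
            Had r x lx * Had r y ly * psiIdhw r c x y|) (hmem 3 (Or.inr (Or.inr rfl))))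
        · have hv := hval 2 (L + 1) 0 0 (Or.inr (Or.inl rfl)) (by omega) (by omega) h0L h0L
          rw [Nat.add_sub_cancel] at hv
          simp only [e21, e22, if_true, if_false] at hv
          rw [if_pos ⟨⟨hpx, by omega⟩, by omega⟩] at hv
          exact hv.symm.trans_le (Finset.le_sup' (fun c => |∑ x ∈ Finset.range (2 ^ r), ∑ y ∈ Finset.range (2 ^ r),
            Had r x lx * Had r y ly * psiIdhw r c x y|) (hmem 2 (Or.inr (Or.inl rfl))))
      · have hpy : 2 ^ L ≤ ly := by rw [hm] at hml; omega
        have hv := hval 1 (L + 1) 0 0 (Or.inl rfl) (by omega) (by omega) h0L h0L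
        rw [Nat.add_sub_cancel] at hv
        simp only [e11, e12, if_true, if_false] at hv
        rw [if_pos ⟨by omega, ⟨hpy, by omega⟩⟩] at hv
        exact hv.symm.trans_le (Finset.le_sup' (fun c => |∑ x ∈ Finset.range (2 ^ r), ∑ y ∈ Finset.range (2 ^ r),
            Had r x lx * Had r y ly * psiIdhw r c x y|) (hmem 1 (Or.inl rfl)))
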